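/- For b, c ≥ 0, the polynomial 5!·f(n − 1/2) is divisible by n, where f(n) = binom(n+5,5) + b·binom(n+4,5) + c·binom(n+3,5) + c·binom(n+2,5) + b·binom(n+1,5) + binom(n,5), and the quotient equals 2(1+b+c)n⁴ + 5(23+7b−c)n² + 1689/8 − (71/8)b + (9/8)c. -/

import Mathlib

/-- Polynomial binomial coefficient `binom(x, k) = x(x-1)⋯(x-k+1)/k!` in a real variable. -/
noncomputable def rbinom (x : ℝ) (k : ℕ) : ℝ :=
  (∏ j ∈ Finset.range k, (x - (j : ℝ))) / (k.factorial : ℝ)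

theorem stmt13 (b c : ℝ) (hb : 0 ≤ b) (hc : 0 ≤ c) (n : ℝ) :
    (Nat.factorial 5 : ℝ) *
        (rbinom (n - 1 / 2 + 5) 5 + b * rbinom (n - 1 / 2 + 4) 5 +
          c * rbinom (n - 1 / 2 + 3) 5 + c * rbinom (n - 1 / 2 + 2) 5 +
          b * rbinom (n - 1 / 2 + 1) 5 + rbinom (n - 1 / 2) 5) =
      n * (2 * (1 + b + c) * n ^ 4 + 5 * (23 + 7 * b - c) * n ^ 2 +
        (1689 / 8 - (71 / 8) * b + (9 / 8) * c)) := by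
  simp only [rbinom, Finset.prod_range_succ, Finset.prod_range_zero, Nat.factorial]
  push_cast
  ring
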